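/- Let n ≥ 1, let l, r : {1,…,n} → ℝ satisfy l_i < r_i for all i, and assume μ_n(C) > 0. For a Borel probability measure ν on ℝ write B(ν) = {u ∈ (0,1)^n : F_ν(l_i) < u_i ≤ F_ν(r_i) for all i}. If a Borel probability measure ν₀ on ℝ maximizes the conditional probability μ_n(B(ν) | C) over all Borel probability measures ν on ℝ, then ν₀ maximizes the nonparametric likelihood ∏_{i=1}^n (F_ν(r_i) − F_ν(l_i)) over all Borel probability measures ν on ℝ; i.e., any maximizer of the fiducial plausibility is a nonparametric maximum likelihood estimator. -/
import Mathlib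


open MeasureTheory ProbabilityTheory

/-- The uniform probability measure on the interval `(0,1) ⊂ ℝ`. -/
noncomputable def unifMeas : Measure ℝ := MeasureTheory.volume.restrict (Set.Ioo (0 : ℝ) 1)

/-- The `n`-fold product of the uniform measure on `(0,1)`. -/
noncomputable def unifPi (n : ℕ) : Measure (Fin n → ℝ) := Measure.pi fun _ => unifMeas

/-- The set `B(ν) = {u ∈ (0,1)^n : F_ν(l i) < u i ≤ F_ν(r i) ∀ i}`. -/
def fidSet (n : ℕ) (l r : Fin n → ℝ) (ν : Measure ℝ) : Set (Fin n → ℝ) :=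
  {u : Fin n → ℝ | (∀ i, u i ∈ Set.Ioo (0 : ℝ) 1) ∧
    ∀ i, cdf ν (l i) < u i ∧ u i ≤ cdf ν (r i)}

/-- The constraint set `C = {u ∈ (0,1)^n : ∀ i j, r i ≤ l j → u i < u j}`. -/
def constraintSet (n : ℕ) (l r : Fin n → ℝ) : Set (Fin n → ℝ) :=
  {u : Fin n → ℝ | (∀ i, u i ∈ Set.Ioo (0 : ℝ) 1) ∧ ∀ i j, r i ≤ l j → u i < u j}

instance : IsProbabilityMeasure unifMeas := by
  constructor
  simp [unifMeas, Measure.restrict_apply_univ, Real.volume_Ioo]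

instance (n : ℕ) : IsProbabilityMeasure (unifPi n) := by
  unfold unifPi; infer_instance

lemma fidSet_subset (n : ℕ) (l r : Fin n → ℝ) (ν : Measure ℝ) :
    fidSet n l r ν ⊆ constraintSet n l r := by
  rintro u ⟨h1, h2⟩
  refine ⟨h1, fun i j hij => ?_⟩
  calc u i ≤ cdf ν (r i) := (h2 i).2
    _ ≤ cdf ν (l j) := (cdf ν).mono hij
    _ < u j := (h2 j).1

lemma unifMeas_inter (a b : ℝ) (ha : 0 ≤ a) (hab : a ≤ b) (hb : b ≤ 1) :
    unifMeas (Set.Ioo 0 1 ∩ Set.Ioc a b) = ENNReal.ofReal (b - a) := by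
  apply le_antisymm
  · calc unifMeas (Set.Ioo 0 1 ∩ Set.Ioc a b)
        ≤ MeasureTheory.volume (Set.Ioo 0 1 ∩ Set.Ioc a b) :=
          Measure.restrict_le_self _
      _ ≤ MeasureTheory.volume (Set.Ioc a b) := measure_mono Set.inter_subset_right
      _ = ENNReal.ofReal (b - a) := Real.volume_Ioc
  · have hsub : Set.Ioo a b ⊆ Set.Ioo 0 1 ∩ Set.Ioc a b := fun x hx =>
      ⟨⟨lt_of_le_of_lt ha hx.1, lt_of_lt_of_le hx.2 hb⟩, hx.1, hx.2.le⟩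
    calc ENNReal.ofReal (b - a) = MeasureTheory.volume (Set.Ioo a b) := Real.volume_Ioo.symm
      _ = unifMeas (Set.Ioo a b) := by
          rw [unifMeas, Measure.restrict_apply measurableSet_Ioo]
          congr 1
          rw [eq_comm, Set.inter_eq_left]
          exact fun x hx => ⟨lt_of_le_of_lt ha hx.1, lt_of_lt_of_le hx.2 hb⟩
      _ ≤ _ := measure_mono hsub

lemma fidSet_eq_pi (n : ℕ) (l r : Fin n → ℝ) (ν : Measure ℝ) :
    fidSet n l r ν =
      Set.pi Set.univ (fun i => Set.Ioo 0 1 ∩ Set.Ioc (cdf ν (l i)) (cdf ν (r i))) := by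
  ext u
  simp only [fidSet, Set.mem_setOf_eq, Set.mem_pi, Set.mem_univ, forall_true_left,
    Set.mem_inter_iff, Set.mem_Ioc]
  constructor
  · rintro ⟨h1, h2⟩ i; exact ⟨h1 i, h2 i⟩
  · intro h; exact ⟨fun i => (h i).1, fun i => (h i).2⟩

lemma unifPi_fidSet (n : ℕ) (l r : Fin n → ℝ) (hlr : ∀ i, l i < r i)
    (ν : Measure ℝ) [IsProbabilityMeasure ν] :
    unifPi n (fidSet n l r ν) =
      ENNReal.ofReal (∏ i : Fin n, (cdf ν (r i) - cdf ν (l i))) := by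
  rw [fidSet_eq_pi, unifPi, Measure.pi_pi]
  rw [ENNReal.ofReal_prod_of_nonneg (fun i _ => sub_nonneg.mpr ((cdf ν).mono (hlr i).le))]
  refine Finset.prod_congr rfl fun i _ => ?_
  exact unifMeas_inter _ _ (cdf_nonneg ν (l i)) ((cdf ν).mono (hlr i).le) (cdf_le_one ν (r i))

/-- Assume `μ_n(C) > 0`. If a Borel probability measure `ν₀` maximizes the
conditional fiducial plausibility `μ_n(B(ν) ∩ C) / μ_n(C)` over all Borel probability
measures `ν`, then `ν₀` maximizes the nonparametric likelihood
`∏ i, (F_ν(r i) − F_ν(l i))`; i.e. any maximizer of the fiducial plausibility is an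
NPMLE. -/
theorem stmt10 (n : ℕ) (hn : 1 ≤ n) (l r : Fin n → ℝ) (hlr : ∀ i, l i < r i)
    (hC : 0 < unifPi n (constraintSet n l r))
    (ν₀ : Measure ℝ) [IsProbabilityMeasure ν₀]
    (hmax : ∀ ν : Measure ℝ, IsProbabilityMeasure ν →
      unifPi n (fidSet n l r ν ∩ constraintSet n l r) / unifPi n (constraintSet n l r) ≤
        unifPi n (fidSet n l r ν₀ ∩ constraintSet n l r) / unifPi n (constraintSet n l r)) :
    ∀ ν : Measure ℝ, IsProbabilityMeasure ν →
      ∏ i : Fin n, (cdf ν (r i) - cdf ν (l i)) ≤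
        ∏ i : Fin n, (cdf ν₀ (r i) - cdf ν₀ (l i)) := by
  intro ν hν
  have key : ∀ (μ : Measure ℝ) [IsProbabilityMeasure μ],
      unifPi n (fidSet n l r μ ∩ constraintSet n l r)
        = ENNReal.ofReal (∏ i : Fin n, (cdf μ (r i) - cdf μ (l i))) := by
    intro μ hμ
    rw [Set.inter_eq_left.mpr (fidSet_subset n l r μ), unifPi_fidSet n l r hlr μ]
  have h := hmax ν hν
  rw [key ν, key ν₀] at h
  set c := unifPi n (constraintSet n l r) with hc'
  have hc0 : c ≠ 0 := hC.ne'
  have hctop : c ≠ ⊤ := measure_ne_top _ _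
  have h2 : ENNReal.ofReal (∏ i : Fin n, (cdf ν (r i) - cdf ν (l i))) ≤
      ENNReal.ofReal (∏ i : Fin n, (cdf ν₀ (r i) - cdf ν₀ (l i))) := by
    have := mul_le_mul_left h c
    rwa [ENNReal.div_mul_cancel hc0 hctop, ENNReal.div_mul_cancel hc0 hctop] at this
  have hnn : 0 ≤ ∏ i : Fin n, (cdf ν₀ (r i) - cdf ν₀ (l i)) :=
    Finset.prod_nonneg fun i _ => sub_nonneg.mpr ((cdf ν₀).mono (hlr i).le)
  exact (ENNReal.ofReal_le_ofReal_iff hnn).mp h2
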